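/- Let c, p : [0,∞) → ℝ be differentiable and satisfy c' = k1(e0 − c)(s0 − c − p) − k1·K_M·c and p' = k2·c with c(0) = 0, p(0) = 0, where k1, k−1, k2, e0, s0 > 0 and K_M = (k−1+k2)/k1. Assume 0 ≤ c(t) ≤ λ and 0 ≤ p(t) ≤ s0 for all t ≥ 0, where λ = ½(e0+K_M+s0) − ½√((e0+K_M+s0)² − 4e0·s0). Then with E_T(t) = c(t) − e0(s0 − p(t))/(e0 + K_M + s0 − p(t)) and ν = k2/(k−1+k2), for all t ≥ 0: |E_T(t)| ≤ |E_T(0)|·exp(−k1(K_M + e0)t/2) + λ·(λ/(e0+K_M) + ν·(e0/(e0+K_M))·(K_M/(e0+K_M))). -/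

import Mathlib

private lemma sqrt_add_le' (x y : ℝ) (hx : 0 ≤ x) (hy : 0 ≤ y) :
    Real.sqrt (x + y) ≤ Real.sqrt x + Real.sqrt y := by
  have h1 := Real.sq_sqrt hx
  have h2 := Real.sq_sqrt hy
  have h3 := Real.sqrt_nonneg x
  have h4 := Real.sqrt_nonneg y
  have : x + y ≤ (Real.sqrt x + Real.sqrt y) ^ 2 := by nlinarith [mul_nonneg h3 h4]
  calc Real.sqrt (x + y) ≤ Real.sqrt ((Real.sqrt x + Real.sqrt y) ^ 2) :=
        Real.sqrt_le_sqrt this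
    _ = Real.sqrt x + Real.sqrt y := Real.sqrt_sq (by positivity)

set_option maxHeartbeats 1000000 in
/-- error bound for the total QSSA expression as used in practice
(the Padé-type approximant of the c-nullcline). -/
theorem tQSSA_practical_bound (k1 km1 k2 e0 s0 KM lam ν : ℝ)
    (hk1 : 0 < k1) (hkm1 : 0 < km1) (hk2 : 0 < k2) (he0 : 0 < e0) (hs0 : 0 < s0)
    (hKM : KM = (km1 + k2) / k1)
    (hlam : lam = (e0 + KM + s0) / 2 - Real.sqrt ((e0 + KM + s0) ^ 2 - 4 * e0 * s0) / 2)
    (hν : ν = k2 / (km1 + k2))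
    (c p : ℝ → ℝ)
    (hc : ∀ t : ℝ, 0 ≤ t →
      HasDerivAt c (k1 * (e0 - c t) * (s0 - c t - p t) - k1 * KM * c t) t)
    (hp : ∀ t : ℝ, 0 ≤ t → HasDerivAt p (k2 * c t) t)
    (hc0 : c 0 = 0) (hp0 : p 0 = 0)
    (hcb : ∀ t : ℝ, 0 ≤ t → 0 ≤ c t ∧ c t ≤ lam)
    (hpb : ∀ t : ℝ, 0 ≤ t → 0 ≤ p t ∧ p t ≤ s0) :
    ∀ t : ℝ, 0 ≤ t →
      |c t - e0 * (s0 - p t) / (e0 + KM + s0 - p t)| ≤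
        |c 0 - e0 * (s0 - p 0) / (e0 + KM + s0 - p 0)| * Real.exp (-(k1 * (KM + e0) * t) / 2)
          + lam * (lam / (e0 + KM) + ν * (e0 / (e0 + KM)) * (KM / (e0 + KM))) := by
  have hKMpos : 0 < KM := by rw [hKM]; positivity
  have heK : 0 < e0 + KM := by linarith
  have hlam0 : 0 ≤ lam := le_trans (hcb 0 le_rfl).1 (hcb 0 le_rfl).2
  -- denominator bounds
  have hD : ∀ t : ℝ, 0 ≤ t → e0 + KM ≤ e0 + KM + s0 - p t := by
    intro t ht; have := (hpb t ht).2; linarith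
  have hDpos : ∀ t : ℝ, 0 ≤ t → 0 < e0 + KM + s0 - p t := by
    intro t ht; linarith [hD t ht]
  have ha0 : 0 < k1 * (e0 + KM) := by positivity
  set a0 : ℝ := k1 * (e0 + KM) with ha0def
  have hB0 : 0 ≤ k1 * lam ^ 2 + k2 * e0 * lam / (e0 + KM) := by positivity
  set B : ℝ := k1 * lam ^ 2 + k2 * e0 * lam / (e0 + KM) with hBdef
  have hC0 : 0 ≤ B ^ 2 / a0 := by positivity
  set C : ℝ := B ^ 2 / a0 with hCdef
  set E : ℝ → ℝ := fun t => c t - e0 * (s0 - p t) / (e0 + KM + s0 - p t) with hEdef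
  set b : ℝ → ℝ := fun t =>
    k1 * (c t) ^ 2 + k2 * c t * (e0 * (e0 + KM)) / (e0 + KM + s0 - p t) ^ 2 with hbdef
  -- derivative of E
  have hE : ∀ t : ℝ, 0 ≤ t →
      HasDerivAt E (-(k1 * (e0 + KM + s0 - p t)) * E t + b t) t := by
    intro t ht
    have hpt := hp t ht
    have hct := hc t ht
    have hden : (e0 + KM + s0 - p t) ≠ 0 := ne_of_gt (hDpos t ht)
    have hnum : HasDerivAt (fun s => e0 * (s0 - p s)) (e0 * (0 - k2 * c t)) t :=
      ((hasDerivAt_const t s0).sub hpt).const_mul e0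
    have hdenD : HasDerivAt (fun s => e0 + KM + s0 - p s) (0 - k2 * c t) t :=
      (hasDerivAt_const t (e0 + KM + s0)).sub hpt
    have hquot := hnum.div hdenD hden
    have := hct.sub hquot
    refine this.congr_deriv ?_
    simp only [hEdef, hbdef]
    field_simp
    ring
  -- bounds on b
  have hb_nonneg : ∀ t : ℝ, 0 ≤ t → 0 ≤ b t := by
    intro t ht
    have h1 := (hcb t ht).1
    have h2 := hDpos t ht
    simp only [hbdef]
    positivity
  have hb_le : ∀ t : ℝ, 0 ≤ t → b t ≤ B := by
    intro t ht
    have h1 := (hcb t ht).1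
    have h2 := (hcb t ht).2
    have h3 := hD t ht
    have h4 := hDpos t ht
    simp only [hbdef, hBdef]
    have key : k2 * c t * (e0 * (e0 + KM)) / (e0 + KM + s0 - p t) ^ 2 ≤
        k2 * lam * (e0 * (e0 + KM)) / (e0 + KM) ^ 2 := by
      gcongr
      all_goals first | positivity | exact h1 | exact h2 | nlinarith
    have heq : k2 * lam * (e0 * (e0 + KM)) / (e0 + KM) ^ 2 = k2 * e0 * lam / (e0 + KM) := by
      field_simp
    have hsq : k1 * (c t) ^ 2 ≤ k1 * lam ^ 2 := by
      nlinarith [mul_le_mul_of_nonneg_left (mul_self_le_mul_self h1 h2) hk1.le]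
    rw [heq] at key
    linarith
  -- Lyapunov function F
  set F : ℝ → ℝ := fun t => C / a0 * Real.exp (a0 * t) - Real.exp (a0 * t) * (E t) ^ 2
    with hFdef
  have hexp : ∀ t : ℝ, HasDerivAt (fun s => Real.exp (a0 * s)) (Real.exp (a0 * t) * a0) t := by
    intro t
    have := ((hasDerivAt_id t).const_mul a0).exp
    simpa using this
  have hF : ∀ t : ℝ, 0 ≤ t → HasDerivAt F
      (C / a0 * (Real.exp (a0 * t) * a0) -
        (Real.exp (a0 * t) * a0 * (E t) ^ 2 +
          Real.exp (a0 * t) *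
            (2 * E t * (-(k1 * (e0 + KM + s0 - p t)) * E t + b t)))) t := by
    intro t ht
    have h1 := (hexp t).const_mul (C / a0)
    have h2 : HasDerivAt (fun s => (E s) ^ 2)
        (2 * E t * (-(k1 * (e0 + KM + s0 - p t)) * E t + b t)) t := by
      have := (hE t ht).pow 2
      refine this.congr_deriv ?_
      push_cast
      ring
    exact h1.sub ((hexp t).mul h2)
  have hF' : ∀ t : ℝ, 0 ≤ t → 0 ≤ C / a0 * (Real.exp (a0 * t) * a0) -
      (Real.exp (a0 * t) * a0 * (E t) ^ 2 +
        Real.exp (a0 * t) *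
          (2 * E t * (-(k1 * (e0 + KM + s0 - p t)) * E t + b t))) := by
    intro t ht
    have hbn := hb_nonneg t ht
    have hbl := hb_le t ht
    have ha : a0 ≤ k1 * (e0 + KM + s0 - p t) := by
      rw [ha0def]; exact mul_le_mul_of_nonneg_left (hD t ht) hk1.le
    have key : a0 * (E t) ^ 2 +
        2 * E t * (-(k1 * (e0 + KM + s0 - p t)) * E t + b t) ≤ C := by
      have h5 : a0 * (E t) ^ 2 + 2 * E t * (-(k1 * (e0 + KM + s0 - p t)) * E t + b t) ≤
          -(a0 * (E t) ^ 2) + 2 * E t * b t := by nlinarith [sq_nonneg (E t)]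
      have h6 : -(a0 * (E t) ^ 2) + 2 * E t * b t ≤ B ^ 2 / a0 := by
        rw [le_div_iff₀ ha0]
        nlinarith [sq_nonneg (a0 * E t - b t), mul_self_le_mul_self hbn hbl]
      calc a0 * (E t) ^ 2 + 2 * E t * (-(k1 * (e0 + KM + s0 - p t)) * E t + b t)
          ≤ -(a0 * (E t) ^ 2) + 2 * E t * b t := h5
        _ ≤ B ^ 2 / a0 := h6
        _ = C := hCdef.symm
    have hexp_pos : 0 < Real.exp (a0 * t) := Real.exp_pos _
    have expand : C / a0 * (Real.exp (a0 * t) * a0) -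
        (Real.exp (a0 * t) * a0 * (E t) ^ 2 +
          Real.exp (a0 * t) *
            (2 * E t * (-(k1 * (e0 + KM + s0 - p t)) * E t + b t))) =
        Real.exp (a0 * t) * (C - (a0 * (E t) ^ 2 +
          2 * E t * (-(k1 * (e0 + KM + s0 - p t)) * E t + b t))) := by
      field_simp
    rw [expand]
    exact mul_nonneg hexp_pos.le (by linarith)
  have hmono : MonotoneOn F (Set.Ici (0 : ℝ)) := by
    apply monotoneOn_of_deriv_nonneg (convex_Ici 0)
    · intro t ht
      exact (hF t ht).continuousAt.continuousWithinAt
    · intro t ht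
      rw [interior_Ici] at ht
      exact ((hF t ht.le).differentiableAt).differentiableWithinAt
    · intro t ht
      rw [interior_Ici] at ht
      rw [(hF t ht.le).deriv]
      exact hF' t ht.le
  -- conclude
  intro t ht
  have hFle : F 0 ≤ F t := hmono Set.self_mem_Ici ht ht
  have hexp_pos : 0 < Real.exp (a0 * t) := Real.exp_pos _
  have hFle' : C / a0 * Real.exp (a0 * 0) - Real.exp (a0 * 0) * (E 0) ^ 2 ≤
      C / a0 * Real.exp (a0 * t) - Real.exp (a0 * t) * (E t) ^ 2 := hFle
  rw [mul_zero, Real.exp_zero, mul_one, one_mul] at hFle'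
  have hCa : 0 ≤ C / a0 := by positivity
  have h8 : Real.exp (a0 * t) * (E t) ^ 2 ≤ (E 0) ^ 2 + C / a0 * Real.exp (a0 * t) := by
    linarith
  have h9 : (E t) ^ 2 ≤ ((E 0) ^ 2 + C / a0 * Real.exp (a0 * t)) / Real.exp (a0 * t) :=
    (le_div_iff₀ hexp_pos).2 (by linarith)
  have hV : (E t) ^ 2 ≤ (E 0) ^ 2 * Real.exp (-(a0 * t)) + C / a0 := by
    rw [Real.exp_neg]
    calc (E t) ^ 2 ≤ ((E 0) ^ 2 + C / a0 * Real.exp (a0 * t)) / Real.exp (a0 * t) := h9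
      _ = (E 0) ^ 2 * (Real.exp (a0 * t))⁻¹ + C / a0 := by
          rw [add_div, mul_div_assoc, div_self (ne_of_gt hexp_pos), mul_one, div_eq_mul_inv]
  have habs : |E t| ≤ |E 0| * Real.exp (-(a0 * t) / 2) + B / a0 := by
    have h10 : |E t| = Real.sqrt ((E t) ^ 2) := (Real.sqrt_sq_eq_abs _).symm
    have h11 : Real.sqrt ((E t) ^ 2) ≤
        Real.sqrt ((E 0) ^ 2 * Real.exp (-(a0 * t)) + C / a0) := Real.sqrt_le_sqrt hV
    have h12 : Real.sqrt ((E 0) ^ 2 * Real.exp (-(a0 * t)) + C / a0) ≤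
        Real.sqrt ((E 0) ^ 2 * Real.exp (-(a0 * t))) + Real.sqrt (C / a0) := by
      apply sqrt_add_le' _ _ (by positivity) hCa
    have h13 : Real.sqrt ((E 0) ^ 2 * Real.exp (-(a0 * t))) =
        |E 0| * Real.exp (-(a0 * t) / 2) := by
      rw [Real.sqrt_mul (sq_nonneg _), Real.sqrt_sq_eq_abs, ← Real.exp_half]
    have h14 : Real.sqrt (C / a0) = B / a0 := by
      have hCB : C / a0 = (B / a0) ^ 2 := by
        rw [hCdef, div_div, div_pow, ← pow_two a0]
      rw [hCB, Real.sqrt_sq (by positivity)]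
    rw [h10]
    calc Real.sqrt ((E t) ^ 2) ≤ _ := h11
      _ ≤ _ := h12
      _ = |E 0| * Real.exp (-(a0 * t) / 2) + B / a0 := by rw [h13, h14]
  have hexp_eq : -(a0 * t) / 2 = -(k1 * (KM + e0) * t) / 2 := by
    rw [ha0def]; ring
  have hconst : B / a0 = lam * (lam / (e0 + KM) + ν * (e0 / (e0 + KM)) * (KM / (e0 + KM))) := by
    have hkk : (0:ℝ) < km1 + k2 := by linarith
    have hk1' : k1 ≠ 0 := hk1.ne'
    have heK' : e0 + KM ≠ 0 := heK.ne'
    have hk2eq : k2 = ν * KM * k1 := by rw [hν, hKM]; field_simp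
    rw [hBdef, ha0def, hk2eq]
    field_simp
  have final := habs
  rw [hexp_eq, hconst] at final
  exact final
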